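/- Let 0 < θ < 1 and suppose ξ₁,...,ξ_{n-m}, η₁,...,η_m ∈ [0,1] satisfy ξ₁ᵏ + ... + ξ_{n-m}ᵏ - (η₁ᵏ + ... + η_mᵏ) = θ for all 1 ≤ k ≤ n. Then m = ⌊n/2⌋, and when labelled in increasing order the two families strictly interleave: 0 < η₁ < ξ₁ < η₂ < ξ₂ < ... < η_m < ξ_m < 1 if n = 2m, and 0 < ξ₁ < η₁ < ξ₂ < η₂ < ... < η_m < ξ_{m+1} < 1 if n = 2m+1. -/
import Mathlib

open Polynomial Finset

private lemma nodal_eval (R : Finset ℝ) (t : ℝ) :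
    (Polynomial.X * ∏ r ∈ R, (Polynomial.X - Polynomial.C r)).eval t
      = t * ∏ r ∈ R, (t - r) := by
  simp [Polynomial.eval_prod]

private lemma nodal_coeff_zero (R : Finset ℝ) :
    (Polynomial.X * ∏ r ∈ R, (Polynomial.X - Polynomial.C r)).coeff 0 = 0 := by
  rw [Polynomial.mul_coeff_zero, Polynomial.coeff_X_zero, zero_mul]

private lemma nodal_natDegree (R : Finset ℝ) :
    (Polynomial.X * ∏ r ∈ R, (Polynomial.X - Polynomial.C r)).natDegree = R.card + 1 := by
  have hm : (∏ r ∈ R, (Polynomial.X - Polynomial.C r)).Monic :=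
    monic_prod_of_monic _ _ (fun r _ => monic_X_sub_C r)
  rw [(monic_X (R := ℝ)).natDegree_mul hm, natDegree_X,
    Polynomial.natDegree_prod_of_monic _ _ (fun r _ => monic_X_sub_C r)]
  simp [add_comm]

private lemma poly_eval_sum_zero {S : Finset ℝ} {w : ℝ → ℝ} {n : ℕ}
    (hk : ∀ k : ℕ, 1 ≤ k → k ≤ n → ∑ t ∈ S, w t * t ^ k = 0)
    (P : Polynomial ℝ) (hd : P.natDegree ≤ n) (h0 : P.coeff 0 = 0) :
    ∑ t ∈ S, w t * P.eval t = 0 := by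
  have he : ∀ t : ℝ, P.eval t = ∑ k ∈ Finset.range (n+1), P.coeff k * t ^ k := fun t =>
    Polynomial.eval_eq_sum_range' (lt_of_le_of_lt hd (Nat.lt_succ_self n)) t
  calc ∑ t ∈ S, w t * P.eval t
      = ∑ t ∈ S, ∑ k ∈ range (n+1), w t * (P.coeff k * t ^ k) := by
        simp_rw [he, Finset.mul_sum]
    _ = ∑ k ∈ range (n+1), ∑ t ∈ S, w t * (P.coeff k * t ^ k) := Finset.sum_comm
    _ = ∑ k ∈ range (n+1), P.coeff k * ∑ t ∈ S, w t * t ^ k := by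
        refine Finset.sum_congr rfl (fun k _ => ?_)
        rw [Finset.mul_sum]
        exact Finset.sum_congr rfl (fun t _ => by ring)
    _ = 0 := Finset.sum_eq_zero (by
        intro k hkr
        rcases Nat.eq_zero_or_pos k with h | h
        · rw [h, h0, zero_mul]
        · rw [hk k h (Nat.lt_succ_iff.mp (Finset.mem_range.mp hkr)), mul_zero])

private lemma countEven (N : ℕ) :
    ((Finset.range N).filter (fun s => Even s)).card = (N + 1) / 2 := by
  induction N with
  | zero => simp
  | succ k ih =>
    rw [Finset.range_add_one, Finset.filter_insert]
    by_cases h : Even k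
    · rw [if_pos h, Finset.card_insert_of_notMem (by simp), ih]
      rw [Nat.even_iff] at h; omega
    · rw [if_neg h, ih]
      rw [Nat.even_iff] at h
      have : ¬ (k % 2 = 0) := h
      omega

private lemma countOdd (N : ℕ) :
    ((Finset.range N).filter (fun s => ¬ Even s)).card = N / 2 := by
  have h := Finset.card_filter_add_card_filter_not
    (s := Finset.range N) (p := fun s => Even s)
  rw [countEven, Finset.card_range] at h
  omega

set_option maxHeartbeats 2000000 in
theorem stmt_13 (n m : ℕ) (hmn : m ≤ n) (θ : ℝ) (hθ0 : 0 < θ) (hθ1 : θ < 1)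
    (ξ : Fin (n - m) → ℝ) (η : Fin m → ℝ)
    (hξ : ∀ i, ξ i ∈ Set.Icc (0:ℝ) 1) (hη : ∀ j, η j ∈ Set.Icc (0:ℝ) 1)
    (hξmono : Monotone ξ) (hηmono : Monotone η)
    (hsum : ∀ k : ℕ, 1 ≤ k → k ≤ n → (∑ i, ξ i ^ k) - (∑ j, η j ^ k) = θ) :
    m = n / 2 ∧
      (∀ i, ξ i ∈ Set.Ioo (0:ℝ) 1) ∧ (∀ j, η j ∈ Set.Ioo (0:ℝ) 1) ∧
      (Even n → ∀ (i : Fin m) (j : Fin (n - m)),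
        ((i : ℕ) ≤ (j : ℕ) → η i < ξ j) ∧ ((j : ℕ) < (i : ℕ) → ξ j < η i)) ∧
      (¬ Even n → ∀ (i : Fin (n - m)) (j : Fin m),
        ((i : ℕ) ≤ (j : ℕ) → ξ i < η j) ∧ ((j : ℕ) < (i : ℕ) → η j < ξ i)) := by
  classical
  set A : Finset ℝ := Finset.image ξ Finset.univ with hA
  set B : Finset ℝ := Finset.image η Finset.univ with hB
  set S : Finset ℝ := insert (1:ℝ) (A ∪ B) with hSdef
  set w : ℝ → ℝ := fun t =>
    ((Finset.univ.filter (fun i => ξ i = t)).card : ℝ)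
      - ((Finset.univ.filter (fun j => η j = t)).card : ℝ)
      - (if t = 1 then θ else 0) with hwdef
  have h1S : (1:ℝ) ∈ S := Finset.mem_insert_self _ _
  have hSbounds : ∀ t ∈ S, 0 ≤ t ∧ t ≤ 1 := by
    intro t ht
    rcases Finset.mem_insert.mp ht with rfl | ht
    · exact ⟨zero_le_one, le_refl 1⟩
    rcases Finset.mem_union.mp ht with ht | ht
    · obtain ⟨i, -, rfl⟩ := Finset.mem_image.mp ht; exact ⟨(hξ i).1, (hξ i).2⟩
    · obtain ⟨j, -, rfl⟩ := Finset.mem_image.mp ht; exact ⟨(hη j).1, (hη j).2⟩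
  -- the key power-sum identity for the weighted measure
  have key : ∀ k : ℕ, 1 ≤ k → k ≤ n → ∑ t ∈ S, w t * t ^ k = 0 := by
    intro k hk1 hkn
    have hmapsξ : ∀ i ∈ Finset.univ, ξ i ∈ S := fun i _ =>
      Finset.mem_insert_of_mem (Finset.mem_union_left _ (Finset.mem_image_of_mem ξ (Finset.mem_univ i)))
    have hmapsη : ∀ j ∈ Finset.univ, η j ∈ S := fun j _ =>
      Finset.mem_insert_of_mem (Finset.mem_union_right _ (Finset.mem_image_of_mem η (Finset.mem_univ j)))
    have hξfib : ∑ t ∈ S, ((Finset.univ.filter (fun i => ξ i = t)).card : ℝ) * t ^ k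
        = ∑ i, ξ i ^ k := by
      rw [← Finset.sum_fiberwise_of_maps_to hmapsξ (fun i => ξ i ^ k)]
      refine Finset.sum_congr rfl (fun t _ => ?_)
      have : ∑ i ∈ Finset.univ.filter (fun i => ξ i = t), ξ i ^ k
          = ∑ _i ∈ Finset.univ.filter (fun i => ξ i = t), t ^ k :=
        Finset.sum_congr rfl (fun i hi => by rw [(Finset.mem_filter.mp hi).2])
      rw [this, Finset.sum_const, nsmul_eq_mul]
    have hηfib : ∑ t ∈ S, ((Finset.univ.filter (fun j => η j = t)).card : ℝ) * t ^ k
        = ∑ j, η j ^ k := by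
      rw [← Finset.sum_fiberwise_of_maps_to hmapsη (fun j => η j ^ k)]
      refine Finset.sum_congr rfl (fun t _ => ?_)
      have : ∑ j ∈ Finset.univ.filter (fun j => η j = t), η j ^ k
          = ∑ _j ∈ Finset.univ.filter (fun j => η j = t), t ^ k :=
        Finset.sum_congr rfl (fun j hj => by rw [(Finset.mem_filter.mp hj).2])
      rw [this, Finset.sum_const, nsmul_eq_mul]
    have hite : ∑ t ∈ S, (if t = 1 then θ else 0) * t ^ k = θ := by
      have : ∀ t ∈ S, (if t = 1 then θ else 0) * t ^ k = if t = 1 then θ else 0 := by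
        intro t _; split <;> simp_all
      rw [Finset.sum_congr rfl this, Finset.sum_ite_eq' S 1 (fun _ => θ), if_pos h1S]
    have expand : ∀ t ∈ S, w t * t ^ k
        = ((Finset.univ.filter (fun i => ξ i = t)).card : ℝ) * t ^ k
          - ((Finset.univ.filter (fun j => η j = t)).card : ℝ) * t ^ k
          - (if t = 1 then θ else 0) * t ^ k := by
      intro t _; rw [hwdef]; ring
    rw [Finset.sum_congr rfl expand, Finset.sum_sub_distrib, Finset.sum_sub_distrib,
      hξfib, hηfib, hite, hsum k hk1 hkn, sub_self]
  -- w 1 ≠ 0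
  have hwone : w 1 ≠ 0 := by
    intro h
    rw [hwdef] at h
    norm_num at h
    set a : ℕ := (Finset.univ.filter (fun i => ξ i = (1:ℝ))).card with ha
    set b : ℕ := (Finset.univ.filter (fun j => η j = (1:ℝ))).card with hb
    have hba : (b:ℝ) < a := by linarith
    have hba' : b < a := by exact_mod_cast hba
    have : (b:ℝ) + 1 ≤ a := by exact_mod_cast hba'
    linarith
  -- cardinality: S has exactly n+1 elements, 0 ∉ S
  have hub : S.card ≤ n + 1 := by
    have h1 : S.card ≤ (A ∪ B).card + 1 := Finset.card_insert_le _ _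
    have h2 : (A ∪ B).card ≤ A.card + B.card := Finset.card_union_le _ _
    have h3 : A.card ≤ n - m := by
      calc A.card ≤ Finset.univ.card := Finset.card_image_le
        _ = n - m := by simp
    have h4 : B.card ≤ m := by
      calc B.card ≤ Finset.univ.card := Finset.card_image_le
        _ = m := by simp
    omega
  have hlb0 : n + 1 ≤ (S.erase 0).card := by
    by_contra hcon
    push_neg at hcon
    have h1' : (1:ℝ) ∈ S.erase 0 := Finset.mem_erase.mpr ⟨one_ne_zero, h1S⟩
    set R : Finset ℝ := (S.erase 0).erase 1 with hR
    have hRcard : R.card = (S.erase 0).card - 1 := Finset.card_erase_of_mem h1'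
    have hco : (S.erase 0).card ≠ 0 := Finset.card_ne_zero_of_mem h1'
    set P : Polynomial ℝ := Polynomial.X * ∏ r ∈ R, (Polynomial.X - Polynomial.C r) with hP
    have hdeg : P.natDegree ≤ n := by rw [hP, nodal_natDegree]; omega
    have hz := poly_eval_sum_zero key P hdeg (by rw [hP]; exact nodal_coeff_zero R)
    have hsingle : ∑ t ∈ S, w t * P.eval t = w 1 * P.eval 1 := by
      refine Finset.sum_eq_single_of_mem 1 h1S (fun t ht htne => ?_)
      rcases eq_or_ne t 0 with rfl | ht0
      · rw [hP, nodal_eval]; ring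
      · have htR : t ∈ R := Finset.mem_erase.mpr ⟨htne, Finset.mem_erase.mpr ⟨ht0, ht⟩⟩
        rw [hP, nodal_eval, Finset.prod_eq_zero htR (sub_self t), mul_zero, mul_zero]
    have hpos : 0 < P.eval 1 := by
      rw [hP, nodal_eval]
      refine mul_pos one_pos (Finset.prod_pos (fun r hr => ?_))
      have hrS : r ∈ S := Finset.mem_of_mem_erase (Finset.mem_of_mem_erase hr)
      have hr1 : r ≠ 1 := (Finset.mem_erase.mp hr).1
      have := (hSbounds r hrS).2
      have : r < 1 := lt_of_le_of_ne this hr1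
      linarith
    rw [hsingle] at hz
    exact hwone ((mul_eq_zero.mp hz).resolve_right (ne_of_gt hpos))
  have hlb : n + 1 ≤ S.card := le_trans hlb0 (Finset.card_le_card (Finset.erase_subset _ _))
  have hScard : S.card = n + 1 := le_antisymm hub hlb
  have h0S : (0:ℝ) ∉ S := by
    intro h0
    have := Finset.card_erase_of_mem h0
    omega
  have h1AB : (1:ℝ) ∉ A ∪ B := by
    intro h1
    have : S = A ∪ B := by rw [hSdef, Finset.insert_eq_self.mpr h1]
    have h2 : (A ∪ B).card ≤ A.card + B.card := Finset.card_union_le _ _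
    have h3 : A.card ≤ n - m := by
      calc A.card ≤ Finset.univ.card := Finset.card_image_le
        _ = n - m := by simp
    have h4 : B.card ≤ m := by
      calc B.card ≤ Finset.univ.card := Finset.card_image_le
        _ = m := by simp
    rw [this] at hScard
    omega
  have hABcard : (A ∪ B).card = n := by
    have : S.card = (A ∪ B).card + 1 := by rw [hSdef]; exact Finset.card_insert_of_notMem h1AB
    omega
  have h3 : A.card ≤ n - m := by
    calc A.card ≤ Finset.univ.card := Finset.card_image_le
      _ = n - m := by simp
  have h4 : B.card ≤ m := by
    calc B.card ≤ Finset.univ.card := Finset.card_image_le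
      _ = m := by simp
  have h5 : (A ∪ B).card ≤ A.card + B.card := Finset.card_union_le _ _
  have hAcard : A.card = n - m := by omega
  have hBcard : B.card = m := by omega
  have hdisj : Disjoint A B := by
    have h6 := Finset.card_union_add_card_inter A B
    have h7 : (A ∩ B).card = 0 := by omega
    rw [Finset.card_eq_zero] at h7
    rw [Finset.disjoint_iff_inter_eq_empty]
    exact h7
  have hξinj : Function.Injective ξ := by
    have : A.card = (Finset.univ : Finset (Fin (n-m))).card := by rw [hAcard]; simp
    have hinj := Finset.card_image_iff.mp this
    intro a b hab
    exact hinj (Finset.mem_coe.mpr (Finset.mem_univ a)) (Finset.mem_coe.mpr (Finset.mem_univ b)) hab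
  have hηinj : Function.Injective η := by
    have : B.card = (Finset.univ : Finset (Fin m)).card := by rw [hBcard]; simp
    have hinj := Finset.card_image_iff.mp this
    intro a b hab
    exact hinj (Finset.mem_coe.mpr (Finset.mem_univ a)) (Finset.mem_coe.mpr (Finset.mem_univ b)) hab
  -- values of w
  have hwA : ∀ t ∈ A, w t = 1 := by
    intro t ht
    obtain ⟨i₀, -, rfl⟩ := Finset.mem_image.mp ht
    have hfξ : Finset.univ.filter (fun i => ξ i = ξ i₀) = {i₀} := by
      ext i; simp [hξinj.eq_iff]
    have hfη : Finset.univ.filter (fun j => η j = ξ i₀) = ∅ := by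
      rw [Finset.filter_eq_empty_iff]
      intro j _ hj
      exact Finset.disjoint_left.mp hdisj ht (hj ▸ Finset.mem_image_of_mem η (Finset.mem_univ j))
    have ht1 : ξ i₀ ≠ 1 := fun h => h1AB (h ▸ Finset.mem_union_left _ ht)
    rw [hwdef]
    simp [hfξ, hfη, ht1]
  have hwB : ∀ t ∈ B, w t = -1 := by
    intro t ht
    obtain ⟨j₀, -, rfl⟩ := Finset.mem_image.mp ht
    have hfη : Finset.univ.filter (fun j => η j = η j₀) = {j₀} := by
      ext j; simp [hηinj.eq_iff]
    have hfξ : Finset.univ.filter (fun i => ξ i = η j₀) = ∅ := by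
      rw [Finset.filter_eq_empty_iff]
      intro i _ hi
      exact Finset.disjoint_right.mp hdisj ht (hi ▸ Finset.mem_image_of_mem ξ (Finset.mem_univ i))
    have ht1 : η j₀ ≠ 1 := fun h => h1AB (h ▸ Finset.mem_union_right _ ht)
    rw [hwdef]
    simp [hfξ, hfη, ht1]
  have hw1 : w 1 = -θ := by
    have hfξ : Finset.univ.filter (fun i => ξ i = (1:ℝ)) = ∅ := by
      rw [Finset.filter_eq_empty_iff]
      intro i _ hi
      exact h1AB (hi ▸ Finset.mem_union_left _ (Finset.mem_image_of_mem ξ (Finset.mem_univ i)))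
    have hfη : Finset.univ.filter (fun j => η j = (1:ℝ)) = ∅ := by
      rw [Finset.filter_eq_empty_iff]
      intro j _ hj
      exact h1AB (hj ▸ Finset.mem_union_right _ (Finset.mem_image_of_mem η (Finset.mem_univ j)))
    rw [hwdef]
    simp [hfξ, hfη]
  have hwne : ∀ t ∈ S, w t ≠ 0 := by
    intro t ht
    rcases Finset.mem_insert.mp ht with rfl | ht
    · rw [hw1]; exact neg_ne_zero.mpr (ne_of_gt hθ0)
    rcases Finset.mem_union.mp ht with ht | ht
    · rw [hwA t ht]; exact one_ne_zero
    · rw [hwB t ht]; simp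
  have hSpos : ∀ t ∈ S, 0 < t := by
    intro t ht
    exact lt_of_le_of_ne (hSbounds t ht).1 (fun h => h0S (h ▸ ht))
  -- the increasing enumeration of S
  set E : Fin (n+1) ↪o ℝ := S.orderEmbOfFin hScard with hEdef
  have hErange : ∀ s, E s ∈ S := fun s => Finset.orderEmbOfFin_mem S hScard s
  have hEsurj : ∀ t ∈ S, ∃ s, E s = t := by
    intro t ht
    have : t ∈ Set.range ⇑E := by rw [Finset.range_orderEmbOfFin]; exact_mod_cast ht
    exact this
  have hElast : E ⟨n, by omega⟩ = 1 := by
    refine le_antisymm (hSbounds _ (hErange _)).2 ?_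
    obtain ⟨s, hs⟩ := hEsurj 1 h1S
    rw [← hs]
    exact E.monotone (by rw [Fin.le_def]; exact Nat.lt_succ_iff.mp s.isLt)
  -- adjacent signs alternate
  have halt : ∀ s : ℕ, (hs : s + 1 ≤ n) →
      w (E ⟨s, by omega⟩) * w (E ⟨s+1, by omega⟩) < 0 := by
    intro s hs
    set a : ℝ := E ⟨s, by omega⟩ with hadef
    set b : ℝ := E ⟨s+1, by omega⟩ with hbdef
    have hab : a < b := E.strictMono (by rw [Fin.mk_lt_mk]; omega)
    have haS : a ∈ S := hErange _
    have hbS : b ∈ S := hErange _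
    set R : Finset ℝ := (S.erase a).erase b with hRdef
    have hbR : b ∈ S.erase a := Finset.mem_erase.mpr ⟨ne_of_gt hab, hbS⟩
    have hRcard : R.card = n - 1 := by
      rw [hRdef, Finset.card_erase_of_mem hbR, Finset.card_erase_of_mem haS, hScard]
      omega
    set P : Polynomial ℝ := Polynomial.X * ∏ r ∈ R, (Polynomial.X - Polynomial.C r) with hP
    have hdeg : P.natDegree ≤ n := by rw [hP, nodal_natDegree, hRcard]; omega
    have hz := poly_eval_sum_zero key P hdeg (by rw [hP]; exact nodal_coeff_zero R)
    have hpair : ∑ t ∈ S, w t * P.eval t = w a * P.eval a + w b * P.eval b := by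
      have hsub : ({a, b} : Finset ℝ) ⊆ S := by
        intro x hx
        rcases Finset.mem_insert.mp hx with rfl | hx
        · exact haS
        · rw [Finset.mem_singleton.mp hx]; exact hbS
      have hvan : ∀ x ∈ S, x ∉ ({a, b} : Finset ℝ) → w x * P.eval x = 0 := by
        intro x hx hnx
        simp only [Finset.mem_insert, Finset.mem_singleton] at hnx
        push_neg at hnx
        have hxR : x ∈ R := Finset.mem_erase.mpr ⟨hnx.2, Finset.mem_erase.mpr ⟨hnx.1, hx⟩⟩
        rw [hP, nodal_eval, Finset.prod_eq_zero hxR (sub_self x), mul_zero, mul_zero]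
      rw [← Finset.sum_subset hsub hvan, Finset.sum_pair (ne_of_lt hab)]
    rw [hpair] at hz
    have hPP : 0 < P.eval a * P.eval b := by
      rw [hP, nodal_eval, nodal_eval]
      have hre : a * (∏ r ∈ R, (a - r)) * (b * ∏ r ∈ R, (b - r))
          = (a * b) * ∏ r ∈ R, ((a - r) * (b - r)) := by
        rw [Finset.prod_mul_distrib]; ring
      rw [hre]
      refine mul_pos (mul_pos (hSpos a haS) (hSpos b hbS)) (Finset.prod_pos (fun r hr => ?_))
      have hrS : r ∈ S := Finset.mem_of_mem_erase (Finset.mem_of_mem_erase hr)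
      have hrb : r ≠ b := (Finset.mem_erase.mp hr).1
      have hra : r ≠ a := (Finset.mem_erase.mp (Finset.mem_of_mem_erase hr)).1
      obtain ⟨u, hu⟩ := hEsurj r hrS
      have hus : u.val ≠ s := by
        intro h
        exact hra (by rw [← hu, hadef]; congr 1; exact Fin.ext h)
      have hus1 : u.val ≠ s + 1 := by
        intro h
        exact hrb (by rw [← hu, hbdef]; congr 1; exact Fin.ext h)
      rcases Nat.lt_or_ge u.val s with hlt | hge
      · have : r < a := by rw [← hu, hadef]; exact E.strictMono (by rw [Fin.mk_lt_mk] at *; exact hlt)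
        have h2 : r < b := lt_trans this hab
        exact mul_pos (by linarith) (by linarith)
      · have hgt : s + 1 < u.val := by omega
        have : b < r := by rw [← hu, hbdef]; exact E.strictMono (by rw [Fin.lt_def]; exact hgt)
        have h2 : a < r := lt_trans hab this
        exact mul_pos_of_neg_of_neg (by linarith) (by linarith)
    have hwb : w b ≠ 0 := hwne b hbS
    have hPb : P.eval b ≠ 0 := right_ne_zero_of_mul (ne_of_gt hPP)
    have h3 : (w a * w b) * (P.eval a * P.eval b) = -(w b * P.eval b)^2 := by
      have : w a * P.eval a = -(w b * P.eval b) := by linarith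
      calc (w a * w b) * (P.eval a * P.eval b) = (w a * P.eval a) * (w b * P.eval b) := by ring
        _ = -(w b * P.eval b) * (w b * P.eval b) := by rw [this]
        _ = -(w b * P.eval b)^2 := by ring
    have h4 : 0 < (w b * P.eval b)^2 := by positivity
    nlinarith [hPP, h3, h4]
  -- sign pattern
  have hsignd : ∀ d : ℕ, d ≤ n → (0 < w (E ⟨n - d, by omega⟩) ↔ Odd d) := by
    intro d
    induction d with
    | zero =>
      intro _
      have : (⟨n - 0, by omega⟩ : Fin (n+1)) = ⟨n, by omega⟩ := Fin.ext (by simp)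
      rw [this, hElast, hw1]
      constructor
      · intro h; linarith
      · intro h; exact absurd h (by simp)
    | succ d ih =>
      intro hd
      have ih' := ih (by omega)
      have hidx : (⟨n - (d+1) + 1, by omega⟩ : Fin (n+1)) = ⟨n - d, by omega⟩ :=
        Fin.ext (by simp; omega)
      have hprod := halt (n - (d+1)) (by omega)
      rw [hidx] at hprod
      have hwb : w (E ⟨n - d, by omega⟩) ≠ 0 := hwne _ (hErange _)
      have hgoal : Odd (d+1) ↔ ¬ Odd d := by simp [Nat.odd_iff, Nat.even_iff]; omega
      rw [hgoal]
      rcases lt_trichotomy 0 (w (E ⟨n - d, by omega⟩)) with hpos | heq | hneg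
      · have hwa : w (E ⟨n - (d+1), by omega⟩) < 0 := by nlinarith
        constructor
        · intro h; linarith
        · intro h; exact absurd (ih'.mp hpos) h
      · exact absurd heq.symm hwb
      · have hwa : 0 < w (E ⟨n - (d+1), by omega⟩) := by nlinarith
        constructor
        · intro _; intro hodd; have := ih'.mp; have h2 := ih'.1; 
          exact absurd (ih'.mpr hodd) (by linarith)
        · intro _; exact hwa
  have hsign : ∀ s : Fin (n+1), (0 < w (E s) ↔ Odd (n - s.val)) := by
    intro s
    have hs := Nat.lt_succ_iff.mp s.isLt
    have := hsignd (n - s.val) (by omega)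
    have hidx : (⟨n - (n - s.val), by omega⟩ : Fin (n+1)) = s := Fin.ext (by simp; omega)
    rwa [hidx] at this
  -- membership characterizations
  have hEcases : ∀ s : Fin (n+1), E s = 1 ∨ E s ∈ A ∨ E s ∈ B := by
    intro s
    have := hErange s
    rcases Finset.mem_insert.mp this with h | h
    · exact Or.inl h
    · rcases Finset.mem_union.mp h with h | h
      · exact Or.inr (Or.inl h)
      · exact Or.inr (Or.inr h)
  have hE1 : ∀ s : Fin (n+1), E s = 1 → s.val = n := by
    intro s h
    have : E s = E ⟨n, by omega⟩ := by rw [hElast, h]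
    have := E.injective this
    rw [this]
  have hmemB : ∀ s : Fin (n+1), (E s ∈ B ↔ (s.val < n ∧ Even (n - s.val))) := by
    intro s
    constructor
    · intro hEB
      have hne1 : E s ≠ 1 := fun h => h1AB (h ▸ Finset.mem_union_right _ hEB)
      have hlt : s.val < n := by
        rcases Nat.lt_or_ge s.val n with h | h
        · exact h
        · exfalso
          have : s.val = n := by have := Nat.lt_succ_iff.mp s.isLt; omega
          exact hne1 (by rw [show s = (⟨n, by omega⟩ : Fin (n+1)) from Fin.ext this]; exact hElast)
      refine ⟨hlt, ?_⟩
      have hwneg : w (E s) < 0 := by rw [hwB _ hEB]; norm_num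
      rw [← Nat.not_odd_iff_even]
      intro hodd
      exact absurd (hsign s |>.mpr hodd) (by linarith)
    · rintro ⟨hlt, heven⟩
      rcases hEcases s with h | h | h
      · exact absurd (hE1 s h) (by omega)
      · exfalso
        have hwpos : 0 < w (E s) := by rw [hwA _ h]; norm_num
        have hodd := (hsign s).mp hwpos
        rw [← Nat.not_odd_iff_even] at heven
        exact heven hodd
      · exact h
  have hmemA : ∀ s : Fin (n+1), (E s ∈ A ↔ Odd (n - s.val)) := by
    intro s
    constructor
    · intro hEA
      exact (hsign s).mp (by rw [hwA _ hEA]; norm_num)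
    · intro hodd
      rcases hEcases s with h | h | h
      · exfalso
        have := hE1 s h
        rw [this] at hodd
        simp at hodd
      · exact h
      · exfalso
        have hwneg : w (E s) < 0 := by rw [hwB _ h]; norm_num
        exact absurd ((hsign s).mpr hodd) (by linarith)
  -- m = n / 2
  have hm : m = n / 2 := by
    set Pη : Finset (Fin (n+1)) :=
      Finset.univ.filter (fun s : Fin (n+1) => s.val < n ∧ Even (n - s.val)) with hPη
    have hBP : B = Pη.image (fun s => E s) := by
      ext t
      constructor
      · intro ht
        have htS : t ∈ S := Finset.mem_insert_of_mem (Finset.mem_union_right _ ht)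
        obtain ⟨s, hs⟩ := hEsurj t htS
        rw [Finset.mem_image]
        exact ⟨s, Finset.mem_filter.mpr ⟨Finset.mem_univ s, (hmemB s).mp (hs ▸ ht)⟩, hs⟩
      · intro ht
        obtain ⟨s, hsP, rfl⟩ := Finset.mem_image.mp ht
        exact (hmemB s).mpr (Finset.mem_filter.mp hsP).2
    have hmP : m = Pη.card := by
      rw [← hBcard, hBP, Finset.card_image_of_injective _ E.injective]
    set T : Finset ℕ := (Finset.range n).filter (fun s => Even (n - s)) with hT
    have hPT : Pη.card = T.card := by
      refine Finset.card_bij (fun s _ => s.val) ?_ ?_ ?_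
      · intro s hs
        have := (Finset.mem_filter.mp hs).2
        exact Finset.mem_filter.mpr ⟨Finset.mem_range.mpr this.1, this.2⟩
      · intro a _ b _ hab
        exact Fin.ext hab
      · intro b hb
        have hb' := Finset.mem_filter.mp hb
        have hbn := Finset.mem_range.mp hb'.1
        exact ⟨⟨b, by omega⟩, Finset.mem_filter.mpr ⟨Finset.mem_univ _, hbn, hb'.2⟩, rfl⟩
    have hTcard : T.card = n / 2 := by
      by_cases hn : Even n
      · have hcongr : T = (Finset.range n).filter (fun s => Even s) := by
          apply Finset.filter_congr
          intro s hs
          rw [Nat.even_sub (le_of_lt (Finset.mem_range.mp hs))]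
          simp [hn]
        rw [hcongr, countEven]
        rw [Nat.even_iff] at hn
        omega
      · have hcongr : T = (Finset.range n).filter (fun s => ¬ Even s) := by
          apply Finset.filter_congr
          intro s hs
          rw [Nat.even_sub (le_of_lt (Finset.mem_range.mp hs))]
          simp [hn]
        rw [hcongr, countOdd]
    omega
  refine ⟨hm, ?_, ?_, ?_, ?_⟩
  · intro i
    have hiS : ξ i ∈ S :=
      Finset.mem_insert_of_mem (Finset.mem_union_left _ (Finset.mem_image_of_mem ξ (Finset.mem_univ i)))
    refine ⟨hSpos _ hiS, lt_of_le_of_ne (hSbounds _ hiS).2 ?_⟩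
    intro h
    exact h1AB (h ▸ Finset.mem_union_left _ (Finset.mem_image_of_mem ξ (Finset.mem_univ i)))
  · intro j
    have hjS : η j ∈ S :=
      Finset.mem_insert_of_mem (Finset.mem_union_right _ (Finset.mem_image_of_mem η (Finset.mem_univ j)))
    refine ⟨hSpos _ hjS, lt_of_le_of_ne (hSbounds _ hjS).2 ?_⟩
    intro h
    exact h1AB (h ▸ Finset.mem_union_right _ (Finset.mem_image_of_mem η (Finset.mem_univ j)))
  · -- even case
    intro hn i j
    obtain ⟨m', hm'⟩ := hn
    have hn2 : n = 2 * m := by omega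
    have hnm : n - m = m := by omega
    have hηeq : ∀ jj : Fin m, η jj = E ⟨2*jj.val, by have := jj.isLt; omega⟩ := by
      have hmonof : StrictMono (fun jj : Fin m =>
          E ⟨2*jj.val, by have := jj.isLt; omega⟩) := by
        intro a b hab
        exact E.strictMono (Fin.mk_lt_mk.mpr (by have := Fin.lt_def.mp hab; omega))
      have hfB : ∀ jj : Fin m, E ⟨2*jj.val, by have := jj.isLt; omega⟩ ∈ B := by
        intro jj
        refine (hmemB _).mpr (show 2*jj.val < n ∧ Even (n - 2*jj.val) from ?_)
        have := jj.isLt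
        exact ⟨by omega, ⟨m - jj.val, by omega⟩⟩
      have h1 := Finset.orderEmbOfFin_unique hBcard
        (f := η) (fun x => Finset.mem_image_of_mem η (Finset.mem_univ x))
        (hηmono.strictMono_of_injective hηinj)
      have h2 := Finset.orderEmbOfFin_unique hBcard
        (f := fun jj : Fin m => E ⟨2*jj.val, by have := jj.isLt; omega⟩) hfB hmonof
      intro jj
      exact congrFun (h1.trans h2.symm) jj
    have hξeq : ∀ ii : Fin (n - m), ξ ii = E ⟨2*ii.val+1, by have := ii.isLt; omega⟩ := by
      have hmonof : StrictMono (fun ii : Fin (n-m) =>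
          E ⟨2*ii.val+1, by have := ii.isLt; omega⟩) := by
        intro a b hab
        exact E.strictMono (Fin.mk_lt_mk.mpr (by have := Fin.lt_def.mp hab; omega))
      have hfA : ∀ ii : Fin (n-m), E ⟨2*ii.val+1, by have := ii.isLt; omega⟩ ∈ A := by
        intro ii
        refine (hmemA _).mpr (show Odd (n - (2*ii.val+1)) from ?_)
        have := ii.isLt
        exact ⟨m - ii.val - 1, by omega⟩
      have h1 := Finset.orderEmbOfFin_unique hAcard
        (f := ξ) (fun x => Finset.mem_image_of_mem ξ (Finset.mem_univ x))
        (hξmono.strictMono_of_injective hξinj)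
      have h2 := Finset.orderEmbOfFin_unique hAcard
        (f := fun ii : Fin (n-m) => E ⟨2*ii.val+1, by have := ii.isLt; omega⟩) hfA hmonof
      intro ii
      exact congrFun (h1.trans h2.symm) ii
    constructor
    · intro hij
      rw [hηeq i, hξeq j]
      exact E.strictMono (Fin.mk_lt_mk.mpr (by omega))
    · intro hij
      rw [hηeq i, hξeq j]
      exact E.strictMono (Fin.mk_lt_mk.mpr (by omega))
  · -- odd case
    intro hn i j
    have hn1 : n % 2 = 1 := Nat.odd_iff.mp (Nat.not_even_iff_odd.mp hn)
    have hn2 : n = 2 * m + 1 := by omega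
    have hnm : n - m = m + 1 := by omega
    have hξeq : ∀ ii : Fin (n - m), ξ ii = E ⟨2*ii.val, by have := ii.isLt; omega⟩ := by
      have hmonof : StrictMono (fun ii : Fin (n-m) =>
          E ⟨2*ii.val, by have := ii.isLt; omega⟩) := by
        intro a b hab
        exact E.strictMono (Fin.mk_lt_mk.mpr (by have := Fin.lt_def.mp hab; omega))
      have hfA : ∀ ii : Fin (n-m), E ⟨2*ii.val, by have := ii.isLt; omega⟩ ∈ A := by
        intro ii
        refine (hmemA _).mpr (show Odd (n - 2*ii.val) from ?_)
        have := ii.isLt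
        exact ⟨m - ii.val, by omega⟩
      have h1 := Finset.orderEmbOfFin_unique hAcard
        (f := ξ) (fun x => Finset.mem_image_of_mem ξ (Finset.mem_univ x))
        (hξmono.strictMono_of_injective hξinj)
      have h2 := Finset.orderEmbOfFin_unique hAcard
        (f := fun ii : Fin (n-m) => E ⟨2*ii.val, by have := ii.isLt; omega⟩) hfA hmonof
      intro ii
      exact congrFun (h1.trans h2.symm) ii
    have hηeq : ∀ jj : Fin m, η jj = E ⟨2*jj.val+1, by have := jj.isLt; omega⟩ := by
      have hmonof : StrictMono (fun jj : Fin m =>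
          E ⟨2*jj.val+1, by have := jj.isLt; omega⟩) := by
        intro a b hab
        exact E.strictMono (Fin.mk_lt_mk.mpr (by have := Fin.lt_def.mp hab; omega))
      have hfB : ∀ jj : Fin m, E ⟨2*jj.val+1, by have := jj.isLt; omega⟩ ∈ B := by
        intro jj
        refine (hmemB _).mpr (show 2*jj.val+1 < n ∧ Even (n - (2*jj.val+1)) from ?_)
        have := jj.isLt
        exact ⟨by omega, ⟨m - jj.val, by omega⟩⟩
      have h1 := Finset.orderEmbOfFin_unique hBcard
        (f := η) (fun x => Finset.mem_image_of_mem η (Finset.mem_univ x))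
        (hηmono.strictMono_of_injective hηinj)
      have h2 := Finset.orderEmbOfFin_unique hBcard
        (f := fun jj : Fin m => E ⟨2*jj.val+1, by have := jj.isLt; omega⟩) hfB hmonof
      intro jj
      exact congrFun (h1.trans h2.symm) jj
    constructor
    · intro hij
      rw [hξeq i, hηeq j]
      exact E.strictMono (Fin.mk_lt_mk.mpr (by omega))
    · intro hij
      rw [hξeq i, hηeq j]
      exact E.strictMono (Fin.mk_lt_mk.mpr (by omega))
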